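/- Let X be a real normed space, f : D → ℝ a continuous convex function on an open set D, and x₀ ∈ D. Then f is Gâteaux differentiable at x₀ if and only if there is a unique continuous linear functional x* with x*(x − x₀) ≤ f(x) − f(x₀) for all x ∈ D; in that case x* equals the Gâteaux derivative of f at x₀. -/

import Mathlib

open Set Filter Topology

namespace GxAux
variable {X : Type*} [NormedAddCommGroup X] [NormedSpace ℝ X]

/-- one-sided slope function -/
noncomputable def sl (f : X → ℝ) (x₀ v : X) (t : ℝ) : ℝ := (f (x₀ + t • v) - f x₀) / t

def posI (D : Set X) (x₀ v : X) : Set ℝ := {t : ℝ | 0 < t ∧ x₀ + t • v ∈ D}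

noncomputable def dp (D : Set X) (f : X → ℝ) (x₀ v : X) : ℝ :=
  sInf (sl f x₀ v '' posI D x₀ v)

theorem slope_mono {D : Set X} {f : X → ℝ} (hconv : ConvexOn ℝ D f)
    {x₀ : X} (hx₀ : x₀ ∈ D) (v : X) {s t : ℝ}
    (hs : x₀ + s • v ∈ D) (ht : x₀ + t • v ∈ D) (hs0 : s ≠ 0) (ht0 : t ≠ 0) (hst : s ≤ t) :
    sl f x₀ v s ≤ sl f x₀ v t := by
  have hline : ∀ u : ℝ, (AffineMap.lineMap x₀ (v + x₀) : ℝ →ᵃ[ℝ] X) u = x₀ + u • v := by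
    intro u
    simp [AffineMap.lineMap_apply]
    abel
  have hcomp := hconv.comp_affineMap (AffineMap.lineMap x₀ (v + x₀) : ℝ →ᵃ[ℝ] X)
  have h0 : (0 : ℝ) ∈ (AffineMap.lineMap x₀ (v + x₀) : ℝ →ᵃ[ℝ] X) ⁻¹' D := by
    simp [mem_preimage, hline 0]; simpa using hx₀
  have hsm : s ∈ (AffineMap.lineMap x₀ (v + x₀) : ℝ →ᵃ[ℝ] X) ⁻¹' D := by
    simp [mem_preimage, hline s]; exact hs
  have htm : t ∈ (AffineMap.lineMap x₀ (v + x₀) : ℝ →ᵃ[ℝ] X) ⁻¹' D := by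
    simp [mem_preimage, hline t]; exact ht
  have := hcomp.secant_mono h0 hsm htm hs0 ht0 hst
  simpa [Function.comp, hline, sl, sub_zero] using this

/-- convex combination membership: if `x₀ ∈ D` and `x₀ + t₀ • v ∈ D` then for `0 < t < t₀`,
`x₀ + t • v ∈ D`. -/
theorem seg_mem {D : Set X} (hD : Convex ℝ D) {x₀ : X} (hx₀ : x₀ ∈ D) {v : X} {t₀ t : ℝ}
    (ht₀ : x₀ + t₀ • v ∈ D) (h0 : 0 < t₀) (ht : 0 ≤ t) (htt : t ≤ t₀) :
    x₀ + t • v ∈ D := by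
  have h := hD hx₀ ht₀ (a := 1 - t / t₀) (b := t / t₀)
    (by have := div_le_one_of_le₀ htt h0.le; linarith)
    (div_nonneg ht h0.le) (by ring)
  have key : (1 - t / t₀) • x₀ + (t / t₀) • (x₀ + t₀ • v) = x₀ + t • v := by
    rw [smul_add, smul_smul, div_mul_cancel₀ _ (ne_of_gt h0)]
    module
  rwa [key] at h

/-- eventually membership near 0 -/
theorem mem_eventually {D : Set X} (hDopen : IsOpen D) {x₀ : X} (hx₀ : x₀ ∈ D) (v : X) :
    ∀ᶠ t : ℝ in 𝓝 0, x₀ + t • v ∈ D := by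
  have hc : Continuous fun t : ℝ => x₀ + t • v := by continuity
  have : {t : ℝ | x₀ + t • v ∈ D} ∈ 𝓝 (0 : ℝ) := by
    have := hc.continuousAt (x := (0:ℝ)) |>.preimage_mem_nhds
      (hDopen.mem_nhds (by simpa using hx₀))
    simpa [preimage] using this
  exact this

theorem exists_delta {D : Set X} (hDopen : IsOpen D) {x₀ : X} (hx₀ : x₀ ∈ D) (v : X) :
    ∃ δ : ℝ, 0 < δ ∧ ∀ t : ℝ, |t| < δ → x₀ + t • v ∈ D := by
  have := (mem_eventually hDopen hx₀ v)
  rw [Metric.eventually_nhds_iff] at this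
  obtain ⟨δ, hδ, h⟩ := this
  exact ⟨δ, hδ, fun t ht => h (by simpa [Real.dist_eq] using ht)⟩

theorem posI_nonempty {D : Set X} (hDopen : IsOpen D) {x₀ : X} (hx₀ : x₀ ∈ D) (v : X) :
    (posI D x₀ v).Nonempty := by
  obtain ⟨δ, hδ, h⟩ := exists_delta hDopen hx₀ v
  exact ⟨δ / 2, by positivity, h _ (by rw [abs_of_pos (by positivity)]; linarith)⟩

/-- negative slopes are lower bounds for positive slopes -/
theorem neg_slope_lb {D : Set X} {f : X → ℝ} (hconv : ConvexOn ℝ D f) {x₀ : X} (hx₀ : x₀ ∈ D)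
    (v : X) {s : ℝ} (hs : s < 0) (hsD : x₀ + s • v ∈ D) :
    sl f x₀ v s ∈ lowerBounds (sl f x₀ v '' posI D x₀ v) := by
  rintro _ ⟨t, ⟨ht0, htD⟩, rfl⟩
  exact slope_mono hconv hx₀ v hsD htD (ne_of_lt hs) (ne_of_gt ht0) (le_of_lt (hs.trans ht0))

theorem bddBelow_slopes {D : Set X} {f : X → ℝ} (hconv : ConvexOn ℝ D f) (hDopen : IsOpen D)
    {x₀ : X} (hx₀ : x₀ ∈ D) (v : X) :
    BddBelow (sl f x₀ v '' posI D x₀ v) := by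
  obtain ⟨δ, hδ, h⟩ := exists_delta hDopen hx₀ v
  exact ⟨_, neg_slope_lb hconv hx₀ v (s := -(δ/2)) (by linarith)
    (h _ (by rw [abs_of_neg (by linarith)]; linarith))⟩

theorem dp_le {D : Set X} {f : X → ℝ} (hconv : ConvexOn ℝ D f) (hDopen : IsOpen D)
    {x₀ : X} (hx₀ : x₀ ∈ D) (v : X) {t : ℝ} (ht : t ∈ posI D x₀ v) :
    dp D f x₀ v ≤ sl f x₀ v t :=
  csInf_le (bddBelow_slopes hconv hDopen hx₀ v) (mem_image_of_mem _ ht)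

theorem le_dp {D : Set X} {f : X → ℝ} (hconv : ConvexOn ℝ D f) (hDopen : IsOpen D)
    {x₀ : X} (hx₀ : x₀ ∈ D) (v : X) {s : ℝ} (hs : s < 0) (hsD : x₀ + s • v ∈ D) :
    sl f x₀ v s ≤ dp D f x₀ v :=
  le_csInf ((posI_nonempty hDopen hx₀ v).image _) (neg_slope_lb hconv hx₀ v hs hsD)

/-- the right slope tends to its infimum -/
theorem tendsto_dp {D : Set X} {f : X → ℝ} (hconv : ConvexOn ℝ D f) (hDopen : IsOpen D)
    {x₀ : X} (hx₀ : x₀ ∈ D) (v : X) :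
    Tendsto (sl f x₀ v) (𝓝[>] 0) (𝓝 (dp D f x₀ v)) := by
  rw [Metric.tendsto_nhdsWithin_nhds]
  intro ε hε
  have hlt : dp D f x₀ v < dp D f x₀ v + ε := by linarith
  obtain ⟨_, ⟨t₀, ht₀, rfl⟩, hslt⟩ :=
    exists_lt_of_csInf_lt ((posI_nonempty hDopen hx₀ v).image _) hlt
  refine ⟨t₀, ht₀.1, fun t ht hdist => ?_⟩
  rw [Real.dist_eq, sub_zero, abs_of_pos ht] at hdist
  rw [Real.dist_eq]
  have htmem : t ∈ posI D x₀ v :=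
    ⟨ht, seg_mem hconv.1 hx₀ ht₀.2 ht₀.1 (le_of_lt ht) hdist.le⟩
  have h1 : dp D f x₀ v ≤ sl f x₀ v t := dp_le hconv hDopen hx₀ v htmem
  have h2 : sl f x₀ v t ≤ sl f x₀ v t₀ :=
    slope_mono hconv hx₀ v htmem.2 ht₀.2 (ne_of_gt ht) (ne_of_gt ht₀.1) hdist.le
  rw [abs_lt]; constructor <;> linarith

theorem dp_zero {D : Set X} {f : X → ℝ} (hDopen : IsOpen D) {x₀ : X} (hx₀ : x₀ ∈ D) :
    dp D f x₀ 0 = 0 := by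
  have himg : sl f x₀ (0 : X) '' posI D x₀ 0 = {0} := by
    apply Subset.antisymm
    · rintro _ ⟨t, ht, rfl⟩
      simp [sl]
    · rintro x (rfl : x = 0)
      obtain ⟨t, ht⟩ := posI_nonempty hDopen hx₀ (0 : X)
      exact ⟨t, ht, by simp [sl]⟩
  rw [dp, himg, csInf_singleton]

/-- algebraic: slope of scaled direction -/
theorem sl_smul (f : X → ℝ) (x₀ : X) (v : X) (c : ℝ) (hc : 0 < c) (t : ℝ) :
    sl f x₀ (c • v) t = c * sl f x₀ v (c * t) := by
  simp only [sl, smul_smul, mul_comm t c]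
  rcases eq_or_ne t 0 with rfl | ht
  · simp
  · field_simp

theorem posI_smul (D : Set X) (x₀ : X) (v : X) (c : ℝ) (hc : 0 < c) :
    posI D x₀ (c • v) = (fun t => c⁻¹ * t) '' posI D x₀ v := by
  ext t
  constructor
  · rintro ⟨ht, htD⟩
    exact ⟨c * t, ⟨by positivity, by rwa [smul_smul, mul_comm] at htD⟩,
      by field_simp⟩
  · rintro ⟨s, ⟨hs, hsD⟩, rfl⟩
    refine ⟨by positivity, ?_⟩
    rw [smul_smul]
    rw [show c⁻¹ * s * c = s by field_simp]
    exact hsD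

theorem dp_smul {D : Set X} {f : X → ℝ} (x₀ : X) (v : X) (c : ℝ) (hc : 0 < c) :
    dp D f x₀ (c • v) = c * dp D f x₀ v := by
  have : sl f x₀ (c • v) '' posI D x₀ (c • v) = (fun y => c * y) '' (sl f x₀ v '' posI D x₀ v) := by
    rw [posI_smul D x₀ v c hc, ← image_comp, ← image_comp]
    apply image_congr
    intro t _
    simp only [Function.comp]
    rw [sl_smul f x₀ v c hc, show c * (c⁻¹ * t) = t by field_simp]
  rw [dp, dp, this]
  simp only [← smul_eq_mul, Set.image_smul]
  exact Real.sInf_smul_of_nonneg hc.le _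
theorem tendsto_two_mul : Tendsto (fun t : ℝ => 2 * t) (𝓝[>] 0) (𝓝[>] 0) := by
  rw [tendsto_nhdsWithin_iff]
  constructor
  · have : Tendsto (fun t : ℝ => 2 * t) (𝓝 0) (𝓝 (2 * 0)) :=
      (tendsto_const_nhds.mul tendsto_id)
    simpa using this.mono_left nhdsWithin_le_nhds
  · filter_upwards [self_mem_nhdsWithin] with t ht
    exact mul_pos two_pos (Set.mem_Ioi.1 ht)

theorem dp_add {D : Set X} {f : X → ℝ} (hconv : ConvexOn ℝ D f) (hDopen : IsOpen D)
    {x₀ : X} (hx₀ : x₀ ∈ D) (v w : X) :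
    dp D f x₀ (v + w) ≤ dp D f x₀ v + dp D f x₀ w := by
  have hrhs : Tendsto (fun t => sl f x₀ v (2 * t) + sl f x₀ w (2 * t)) (𝓝[>] 0)
      (𝓝 (dp D f x₀ v + dp D f x₀ w)) :=
    (((tendsto_dp hconv hDopen hx₀ v).comp tendsto_two_mul).add
      ((tendsto_dp hconv hDopen hx₀ w).comp tendsto_two_mul))
  have hlhs := tendsto_dp hconv hDopen hx₀ (v + w)
  refine le_of_tendsto_of_tendsto hlhs hrhs ?_
  have h2 : Tendsto (fun t : ℝ => 2 * t) (𝓝[>] (0:ℝ)) (𝓝 0) :=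
    tendsto_two_mul.mono_right nhdsWithin_le_nhds
  filter_upwards [h2.eventually (mem_eventually hDopen hx₀ v),
    h2.eventually (mem_eventually hDopen hx₀ w), self_mem_nhdsWithin]
    with t hv hw ht
  replace ht : (0:ℝ) < t := ht
  have hmid : f (x₀ + t • (v + w)) ≤ f (x₀ + (2*t) • v) / 2 + f (x₀ + (2*t) • w) / 2 := by
    have hc := hconv.2 hv hw (by norm_num : (0:ℝ) ≤ 1/2) (by norm_num : (0:ℝ) ≤ 1/2)
      (by norm_num : (1:ℝ)/2 + 1/2 = 1)
    have key : ((1:ℝ)/2) • (x₀ + (2*t) • v) + ((1:ℝ)/2) • (x₀ + (2*t) • w)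
        = x₀ + t • (v + w) := by module
    rw [key] at hc
    calc f (x₀ + t • (v + w)) ≤ (1/2) * f (x₀ + (2*t) • v) + (1/2) * f (x₀ + (2*t) • w) := hc
    _ = f (x₀ + (2*t) • v) / 2 + f (x₀ + (2*t) • w) / 2 := by ring
  simp only [sl]
  rw [← add_div, div_le_div_iff₀ ht (by positivity)]
  nlinarith [hmid]
/-- uniform bound on `dp` by continuity at `x₀` -/
theorem dp_bound {D : Set X} {f : X → ℝ} (hconv : ConvexOn ℝ D f) (hDopen : IsOpen D)
    (hcont : ContinuousOn f D) {x₀ : X} (hx₀ : x₀ ∈ D) :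
    ∃ C : ℝ, 0 ≤ C ∧ ∀ v : X, dp D f x₀ v ≤ C * ‖v‖ := by
  have hca : ContinuousAt f x₀ := hcont.continuousAt (hDopen.mem_nhds hx₀)
  obtain ⟨δ₁, hδ₁, h₁⟩ := Metric.continuousAt_iff.1 hca 1 one_pos
  obtain ⟨δ₂, hδ₂, h₂⟩ := Metric.isOpen_iff.1 hDopen x₀ hx₀
  set δ := min δ₁ δ₂ with hδdef
  have hδ : 0 < δ := lt_min hδ₁ hδ₂
  refine ⟨2 / δ, by positivity, fun v => ?_⟩
  rcases eq_or_ne v 0 with rfl | hv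
  · simp [dp_zero hDopen hx₀]
  · have hvn : 0 < ‖v‖ := norm_pos_iff.2 hv
    set t := δ / (2 * ‖v‖) with htdef
    have ht : 0 < t := by positivity
    have hdist : dist (x₀ + t • v) x₀ < δ := by
      rw [dist_eq_norm, add_sub_cancel_left, norm_smul, Real.norm_eq_abs, abs_of_pos ht]
      rw [htdef, div_mul_eq_mul_div, mul_comm]
      rw [mul_div_assoc]
      calc ‖v‖ * (δ / (2 * ‖v‖)) = δ / 2 := by field_simp
      _ < δ := by linarith
    have hmemD : x₀ + t • v ∈ D := h₂ (by simpa [Metric.mem_ball] using hdist.trans_le (min_le_right _ _))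
    have hfb : |f (x₀ + t • v) - f x₀| < 1 := by
      have := h₁ (show dist (x₀ + t • v) x₀ < δ₁ from hdist.trans_le (min_le_left _ _))
      simpa [Real.dist_eq] using this
    have h3 : dp D f x₀ v ≤ sl f x₀ v t := dp_le hconv hDopen hx₀ v ⟨ht, hmemD⟩
    have h4 : sl f x₀ v t ≤ 1 / t := by
      rw [sl]
      gcongr
      exact (le_abs_self _).trans hfb.le
    have h5 : 1 / t = 2 / δ * ‖v‖ := by
      rw [htdef]
      field_simp
    linarith
/-- the left derivative -/
noncomputable def dm (D : Set X) (f : X → ℝ) (x₀ v : X) : ℝ := -dp D f x₀ (-v)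

theorem sl_neg (f : X → ℝ) (x₀ v : X) (s : ℝ) : sl f x₀ v s = -sl f x₀ (-v) (-s) := by
  simp [sl, neg_div, div_neg]

theorem tendsto_neg_Iio : Tendsto (fun s : ℝ => -s) (𝓝[<] (0:ℝ)) (𝓝[>] (0:ℝ)) := by
  rw [tendsto_nhdsWithin_iff]
  constructor
  · simpa using (continuous_neg.tendsto (0:ℝ)).mono_left nhdsWithin_le_nhds
  · filter_upwards [self_mem_nhdsWithin] with s hs
    simpa using hs

theorem tendsto_dm {D : Set X} {f : X → ℝ} (hconv : ConvexOn ℝ D f) (hDopen : IsOpen D)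
    {x₀ : X} (hx₀ : x₀ ∈ D) (v : X) :
    Tendsto (sl f x₀ v) (𝓝[<] 0) (𝓝 (dm D f x₀ v)) := by
  have h := ((tendsto_dp hconv hDopen hx₀ (-v)).comp tendsto_neg_Iio).neg
  rw [← dm] at h
  refine h.congr fun s => ?_
  simp only [Function.comp]
  rw [← sl_neg]
theorem slope_eq_sl (f : X → ℝ) (x₀ v : X) :
    slope (fun t : ℝ => f (x₀ + t • v)) 0 = sl f x₀ v := by
  funext t
  rw [slope_def_field, sl]
  simp

theorem hasDerivAt_of_dp_dm {D : Set X} {f : X → ℝ} (hconv : ConvexOn ℝ D f) (hDopen : IsOpen D)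
    {x₀ : X} (hx₀ : x₀ ∈ D) {v : X} {c : ℝ} (hdp : dp D f x₀ v = c) (hdm : dm D f x₀ v = c) :
    HasDerivAt (fun t : ℝ => f (x₀ + t • v)) c 0 := by
  rw [hasDerivAt_iff_tendsto_slope, slope_eq_sl, ← nhdsLT_sup_nhdsGT, tendsto_sup]
  exact ⟨hdm ▸ tendsto_dm hconv hDopen hx₀ v, hdp ▸ tendsto_dp hconv hDopen hx₀ v⟩

theorem dp_eq_of_hasDerivAt {D : Set X} {f : X → ℝ} (hconv : ConvexOn ℝ D f) (hDopen : IsOpen D)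
    {x₀ : X} (hx₀ : x₀ ∈ D) {v : X} {c : ℝ}
    (h : HasDerivAt (fun t : ℝ => f (x₀ + t • v)) c 0) :
    dp D f x₀ v = c ∧ dm D f x₀ v = c := by
  rw [hasDerivAt_iff_tendsto_slope, slope_eq_sl, ← nhdsLT_sup_nhdsGT, tendsto_sup] at h
  exact ⟨tendsto_nhds_unique (tendsto_dp hconv hDopen hx₀ v) h.2,
    tendsto_nhds_unique (tendsto_dm hconv hDopen hx₀ v) h.1⟩

/-- `dp` at direction `x - x₀` is at most `f x - f x₀`. -/
theorem dp_le_sub {D : Set X} {f : X → ℝ} (hconv : ConvexOn ℝ D f) (hDopen : IsOpen D)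
    {x₀ : X} (hx₀ : x₀ ∈ D) {x : X} (hx : x ∈ D) :
    dp D f x₀ (x - x₀) ≤ f x - f x₀ := by
  have h1 : (1:ℝ) ∈ posI D x₀ (x - x₀) := ⟨one_pos, by simpa using hx⟩
  have := dp_le hconv hDopen hx₀ (x - x₀) h1
  simpa [sl] using this

/-- any continuous linear subgradient is squeezed between `dm` and `dp`. -/
theorem subgrad_le_dp {D : Set X} {f : X → ℝ} (hconv : ConvexOn ℝ D f) (hDopen : IsOpen D)
    {x₀ : X} (hx₀ : x₀ ∈ D) {φ : X →L[ℝ] ℝ}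
    (hφ : ∀ x ∈ D, φ (x - x₀) ≤ f x - f x₀) (v : X) :
    φ v ≤ dp D f x₀ v := by
  refine le_csInf ((posI_nonempty hDopen hx₀ v).image _) ?_
  rintro _ ⟨t, ⟨ht, htD⟩, rfl⟩
  have := hφ _ htD
  rw [add_sub_cancel_left, map_smul, smul_eq_mul] at this
  rw [sl, le_div_iff₀ ht, mul_comm]
  exact this

theorem dm_le_subgrad {D : Set X} {f : X → ℝ} (hconv : ConvexOn ℝ D f) (hDopen : IsOpen D)
    {x₀ : X} (hx₀ : x₀ ∈ D) {φ : X →L[ℝ] ℝ}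
    (hφ : ∀ x ∈ D, φ (x - x₀) ≤ f x - f x₀) (v : X) :
    dm D f x₀ v ≤ φ v := by
  have := subgrad_le_dp hconv hDopen hx₀ hφ (-v)
  rw [map_neg] at this
  rw [dm]
  linarith
theorem dm_le_dp {D : Set X} {f : X → ℝ} (hconv : ConvexOn ℝ D f) (hDopen : IsOpen D)
    {x₀ : X} (hx₀ : x₀ ∈ D) (v : X) : dm D f x₀ v ≤ dp D f x₀ v := by
  have h := dp_add hconv hDopen hx₀ v (-v)
  rw [add_neg_cancel, dp_zero hDopen hx₀] at h
  rw [dm]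
  linarith

/-- Hahn–Banach: a continuous linear subgradient achieving `dp` at a given direction. -/
theorem exists_subgrad_eq_dp {D : Set X} {f : X → ℝ} (hconv : ConvexOn ℝ D f) (hDopen : IsOpen D)
    (hcont : ContinuousOn f D) {x₀ : X} (hx₀ : x₀ ∈ D) (v₀ : X) (hv₀ : v₀ ≠ 0) :
    ∃ G : X →L[ℝ] ℝ, (∀ x ∈ D, G (x - x₀) ≤ f x - f x₀) ∧ G v₀ = dp D f x₀ v₀ := by
  obtain ⟨C, hC0, hC⟩ := dp_bound hconv hDopen hcont hx₀
  set p := LinearPMap.mkSpanSingleton (K := ℝ) (L := ℝ) (σ := RingHom.id ℝ) v₀ (dp D f x₀ v₀) hv₀ with hp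
  have hdom : ∀ y : p.domain, p y ≤ dp D f x₀ y := by
    rintro ⟨y, hy⟩
    obtain ⟨a, rfl⟩ := Submodule.mem_span_singleton.1 hy
    have key : p ⟨a • v₀, hy⟩ = a • (dp D f x₀ v₀) :=
      LinearPMap.mkSpanSingleton'_apply _ _ _ a hy
    show p ⟨a • v₀, hy⟩ ≤ dp D f x₀ (a • v₀)
    rw [key, smul_eq_mul]
    rcases lt_trichotomy a 0 with ha | rfl | ha
    · rw [show a • v₀ = (-a) • (-v₀) by module, dp_smul x₀ (-v₀) (-a) (by linarith)]
      have h1 : dm D f x₀ v₀ ≤ dp D f x₀ v₀ := dm_le_dp hconv hDopen hx₀ v₀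
      rw [dm] at h1
      nlinarith
    · simp [dp_zero hDopen hx₀]
    · rw [dp_smul x₀ v₀ a ha]
  obtain ⟨g, hg_ext, hg_le⟩ := exists_extension_of_le_sublinear p (dp D f x₀)
    (fun c hc x => dp_smul x₀ x c hc) (fun x y => dp_add hconv hDopen hx₀ x y) hdom
  have hbound : ∀ v, ‖g v‖ ≤ C * ‖v‖ := by
    intro v
    rw [Real.norm_eq_abs, abs_le]
    constructor
    · have h2 := (hg_le (-v)).trans (hC (-v))
      rw [map_neg, norm_neg] at h2
      linarith
    · exact (hg_le v).trans (hC v)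
  refine ⟨g.mkContinuous C hbound, fun x hx => ?_, ?_⟩
  · have h5 : g (x - x₀) ≤ dp D f x₀ (x - x₀) := hg_le _
    simp only [LinearMap.mkContinuous_apply]
    exact h5.trans (dp_le_sub hconv hDopen hx₀ hx)
  · have h3 := hg_ext ⟨v₀, Submodule.mem_span_singleton_self v₀⟩
    have h4 : p ⟨v₀, Submodule.mem_span_singleton_self v₀⟩ = dp D f x₀ v₀ :=
      LinearPMap.mkSpanSingleton_apply ℝ ℝ hv₀ _
    simp only [LinearMap.mkContinuous_apply]
    exact h3.trans h4

/-- if the subgradient is unique then `dp = dm = xs`. -/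
theorem unique_subgrad_eq {D : Set X} {f : X → ℝ} (hconv : ConvexOn ℝ D f) (hDopen : IsOpen D)
    (hcont : ContinuousOn f D) {x₀ : X} (hx₀ : x₀ ∈ D) {xs : X →L[ℝ] ℝ}
    (hxs : ∀ x ∈ D, xs (x - x₀) ≤ f x - f x₀)
    (huniq : ∀ y : X →L[ℝ] ℝ, (∀ x ∈ D, y (x - x₀) ≤ f x - f x₀) → y = xs) :
    ∀ v : X, dp D f x₀ v = xs v ∧ dm D f x₀ v = xs v := by
  have hdp : ∀ v : X, dp D f x₀ v = xs v := by
    intro v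
    rcases eq_or_ne v 0 with rfl | hv
    · simp [dp_zero hDopen hx₀]
    · obtain ⟨G, hGsub, hGv⟩ := exists_subgrad_eq_dp hconv hDopen hcont hx₀ v hv
      rw [← hGv, huniq G hGsub]
  intro v
  refine ⟨hdp v, ?_⟩
  rw [dm, hdp (-v), map_neg, neg_neg]
end GxAux

/-- Let `f : D → ℝ` be a continuous convex function on an open set `D` of a
real normed space and `x₀ ∈ D`. Then `f` is Gâteaux differentiable at `x₀` (i.e. the limit
`lim_{t→0} (f(x₀ + t v) − f(x₀))/t` exists for every direction `v` and is a continuous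
linear functional of `v`) if and only if there is a unique continuous linear functional
`x*` with `x*(x − x₀) ≤ f(x) − f(x₀)` for all `x ∈ D`; in that case `x*` equals the
Gâteaux derivative of `f` at `x₀`. -/
theorem gateaux_differentiable_iff_unique_subgradient
    {X : Type*} [NormedAddCommGroup X] [NormedSpace ℝ X]
    (D : Set X) (hDopen : IsOpen D) (f : X → ℝ) (hconv : ConvexOn ℝ D f)
    (hcont : ContinuousOn f D) (x₀ : X) (hx₀ : x₀ ∈ D) :
    ((∃ xstar : X →L[ℝ] ℝ, ∀ v : X,
        HasDerivAt (fun t : ℝ => f (x₀ + t • v)) (xstar v) 0) ↔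
      (∃! xstar : X →L[ℝ] ℝ, ∀ x ∈ D, xstar (x - x₀) ≤ f x - f x₀)) ∧
    (∀ xstar : X →L[ℝ] ℝ,
      (∀ v : X, HasDerivAt (fun t : ℝ => f (x₀ + t • v)) (xstar v) 0) →
      ∀ x ∈ D, xstar (x - x₀) ≤ f x - f x₀) := by
  have partB : ∀ xstar : X →L[ℝ] ℝ,
      (∀ v : X, HasDerivAt (fun t : ℝ => f (x₀ + t • v)) (xstar v) 0) →
      ∀ x ∈ D, xstar (x - x₀) ≤ f x - f x₀ := by
    intro xstar hd x hx
    have h := (GxAux.dp_eq_of_hasDerivAt hconv hDopen hx₀ (hd (x - x₀))).1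
    rw [← h]
    exact GxAux.dp_le_sub hconv hDopen hx₀ hx
  refine ⟨⟨?_, ?_⟩, partB⟩
  · rintro ⟨xstar, hd⟩
    refine ⟨xstar, partB xstar hd, fun y hy => ?_⟩
    ext v
    have h1 := GxAux.subgrad_le_dp hconv hDopen hx₀ hy v
    have h2 := GxAux.dm_le_subgrad hconv hDopen hx₀ hy v
    have h3 := GxAux.dp_eq_of_hasDerivAt hconv hDopen hx₀ (hd v)
    rw [h3.1] at h1
    rw [h3.2] at h2
    exact le_antisymm h1 h2
  · rintro ⟨xs, hxs, huniq⟩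
    have key := GxAux.unique_subgrad_eq hconv hDopen hcont hx₀ hxs huniq
    exact ⟨xs, fun v => GxAux.hasDerivAt_of_dp_dm hconv hDopen hx₀ (key v).1 (key v).2⟩
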